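/- arXiv:2311.05996 — 4 statements merged into one kernel-verified Lean document; each statement's English description precedes it below -/
import Mathlib

section
/- Let (X, D, CO) be a binary branching D-relation with a cyclic order CO that is convex for D. Suppose a, b, c, x ∈ X are all distinct, CO(a,b,c), and D(x,a;b,c). Then (D(x,a;b,c) ∧ CO(c,x,a)) ∨ (D(b,c;a,x) ∧ CO(a,x,b)). -/
/-- In a binary branching D-relation with a convex cyclic order,
if a, b, c, x are all distinct, CO(a,b,c) and D(x,a;b,c), then
(D(x,a;b,c) ∧ CO(c,x,a)) ∨ (D(b,c;a,x) ∧ CO(a,x,b)). -/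
theorem stmt3 {X : Type*} (D : X → X → X → X → Prop) (CO : X → X → X → Prop)
    (d1 : ∀ x y z w, D x y z w → D y x z w ∧ D x y w z ∧ D z w x y)
    (d2 : ∀ x y z w, D x y z w → ¬ D x z y w)
    (d3 : ∀ x y z w a, D x y z w → D a y z w ∨ D x y z a)
    (d4 : ∀ x y z, x ≠ z → y ≠ z → D x y z z)
    (dbb : ∀ x y z w,
      ((x ≠ y ∧ x ≠ z ∧ y ≠ z) ∨ (x ≠ y ∧ x ≠ w ∧ y ≠ w) ∨
       (x ≠ z ∧ x ≠ w ∧ z ≠ w) ∨ (y ≠ z ∧ y ≠ w ∧ z ≠ w)) →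
      D x y z w ∨ D x z y w ∨ D x w y z)
    (co1 : ∀ x y z, CO x y z → CO y z x)
    (co2 : ∀ x y z, CO x y z → ¬ CO x z y)
    (co3 : ∀ x y z w, CO x y z → CO x z w → CO x y w)
    (co4 : ∀ x y z, x ≠ y → y ≠ z → x ≠ z → CO x y z ∨ CO x z y)
    (conv : ∀ x a b c, x ≠ a → x ≠ b → x ≠ c → a ≠ b → a ≠ c → b ≠ c →
      CO a b c → CO c x a → D x a b c ∨ D a b c x)
    (a b c x : X)
    (hab : a ≠ b) (hac : a ≠ c) (hax : a ≠ x)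
    (hbc : b ≠ c) (hbx : b ≠ x) (hcx : c ≠ x)
    (hco : CO a b c) (hD : D x a b c) :
    (D x a b c ∧ CO c x a) ∨ (D b c a x ∧ CO a x b) := by
  -- facts excluded by hD via d2/d1
  have hnxbac : ¬ D x b a c := d2 _ _ _ _ hD
  have hnxbca : ¬ D x b c a := fun h => hnxbac (d1 _ _ _ _ h).2.1
  have hxacb : D x a c b := (d1 _ _ _ _ hD).2.1
  have hnxcab : ¬ D x c a b := fun h => (d2 _ _ _ _ h) hxacb
  have hncabx : ¬ D c a b x := fun h => hnxbca ((d1 _ _ _ _ ((d1 _ _ _ _ h).2.2)).1)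
  have hbca : CO b c a := co1 _ _ _ hco
  have hcab : CO c a b := co1 _ _ _ hbca
  rcases co4 a x b hax hbx.symm hab with haxb | habx
  · -- right branch
    right
    refine ⟨?_, haxb⟩
    rcases conv x b c a hbx.symm hcx.symm hax.symm hbc hab.symm hac.symm hbca haxb with h | h
    · exact absurd h hnxbca
    · exact h
  · rcases co4 b x c hbx hcx.symm hbc with hbxc | hbcx
    · exfalso
      rcases conv x c a b hcx.symm hax.symm hbx.symm hac.symm hbc.symm hab hcab hbxc with h | h
      · exact hnxcab h
      · exact hncabx h
    · -- CO b c x : derive CO c x a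
      left
      refine ⟨hD, ?_⟩
      have hxbc : CO x b c := co1 _ _ _ (co1 _ _ _ hbcx)
      have hxab : CO x a b := co1 _ _ _ (co1 _ _ _ habx)
      exact co1 _ _ _ (co1 _ _ _ (co3 x a b c hxab hxbc))
end

section
/- Given a D-relation D on a set X and a fixed point a ∈ X, the ternary relation C₀ on X \ {a} defined by C₀(x;y,z) ⟺ D(a,x;y,z) is a C-relation on X \ {a}. -/
/-- Given a D-relation D on X and a fixed point a ∈ X, the ternary
relation C₀ on X \ {a} defined by C₀(x;y,z) ⟺ D(a,x;y,z) is a C-relation. -/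
theorem stmt4 {X : Type*} (D : X → X → X → X → Prop) (a : X)
    (d1 : ∀ x y z w, D x y z w → D y x z w ∧ D x y w z ∧ D z w x y)
    (d2 : ∀ x y z w, D x y z w → ¬ D x z y w)
    (d3 : ∀ x y z w e, D x y z w → D e y z w ∨ D x y z e)
    (d4 : ∀ x y z, x ≠ z → y ≠ z → D x y z z) :
    (∀ p q r : {x : X // x ≠ a}, D a p.1 q.1 r.1 → D a p.1 r.1 q.1) ∧
    (∀ p q r : {x : X // x ≠ a}, D a p.1 q.1 r.1 → ¬ D a q.1 p.1 r.1) ∧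
    (∀ p q r s : {x : X // x ≠ a}, D a p.1 q.1 r.1 → D a p.1 s.1 r.1 ∨ D a s.1 q.1 r.1) ∧
    (∀ p q : {x : X // x ≠ a}, p ≠ q → D a p.1 q.1 q.1) := by
  refine ⟨fun p q r h => (d1 _ _ _ _ h).2.1,
    fun p q r h => d2 _ _ _ _ h,
    fun p q r s h => ?_,
    fun p q hpq => d4 a p.1 q.1 (Ne.symm q.2) (fun e => hpq (Subtype.ext e))⟩
  have h' : D q.1 r.1 a p.1 := (d1 _ _ _ _ h).2.2
  rcases d3 _ _ _ _ s.1 h' with h2 | h2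
  · exact Or.inl (d1 _ _ _ _ h2).2.2
  · exact Or.inr (d1 _ _ _ _ h2).2.2
end

section
/- Let (X, D, <) be a D-relation with a convex total order, and define C(x;y,z) to hold iff for every a ∈ X there exists b ≤ a with D(b,x;y,z). Then C satisfies axiom (c2) of C-relations: C(x;y,z) → ¬C(y;x,z). -/
/-- For a D-relation with a convex total order, the derived relation
C(x;y,z) := (∀ a, ∃ b ≤ a, D(b,x;y,z)) satisfies axiom (c2): C(x;y,z) → ¬C(y;x,z). -/
theorem stmt6 {X : Type*} [LinearOrder X] (D : X → X → X → X → Prop)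
    (d1 : ∀ x y z w, D x y z w → D y x z w ∧ D x y w z ∧ D z w x y)
    (d2 : ∀ x y z w, D x y z w → ¬ D x z y w)
    (d3 : ∀ x y z w a, D x y z w → D a y z w ∨ D x y z a)
    (d4 : ∀ x y z, x ≠ z → y ≠ z → D x y z z)
    (conv : ∀ x y z w, x ≤ y → x ≤ z → D x y z w →
      (x < z ∧ x < w ∧ y < z ∧ y < w) ∨ (x < z ∧ x < w ∧ z < y ∧ w < y))
    (x y z : X) :
    (∀ a : X, ∃ b ≤ a, D b x y z) → ¬ (∀ a : X, ∃ b ≤ a, D b y x z) := by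
  intro h1 h2
  obtain ⟨b₁, hb₁, hD1⟩ := h1 (min x (min y z))
  have hb₁x : b₁ ≤ x := hb₁.trans (min_le_left _ _)
  have hb₁y : b₁ ≤ y := hb₁.trans ((min_le_right _ _).trans (min_le_left _ _))
  obtain ⟨b₂, hb₂, hD2⟩ := h2 (min b₁ x)
  have hb₂b₁ : b₂ ≤ b₁ := hb₂.trans (min_le_left _ _)
  have hb₂x : b₂ ≤ x := hb₂.trans (min_le_right _ _)
  have hb₂y : b₂ ≤ y := hb₂b₁.trans hb₁y
  obtain ⟨b₃, hb₃, hD3⟩ := h1 (min b₂ x)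
  have hb₃b₂ : b₃ ≤ b₂ := hb₃.trans (min_le_left _ _)
  have hb₃x : b₃ ≤ x := hb₃.trans (min_le_right _ _)
  -- b₁ < y, from convexity applied to D b₁ x y z
  have hb₁lty : b₁ < y := by
    rcases conv b₁ x y z hb₁x hb₁y hD1 with ⟨h, _⟩ | ⟨h, _⟩ <;> exact h
  -- From d3 on D b₁ x y z with a := b₂ : either contradiction via d2, or D b₁ x y b₂
  have hxy : x < y := by
    rcases d3 b₁ x y z b₂ hD1 with h | h
    · exact absurd hD2 (d2 _ _ _ _ h)
    · -- D b₁ x y b₂ ; rearrange to D b₂ y b₁ x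
      have h' : D b₂ y b₁ x := (d1 _ _ _ _ (d1 _ _ _ _ h).2.2).1
      rcases conv b₂ y b₁ x hb₂y hb₂b₁ h' with ⟨_, _, hc, _⟩ | ⟨_, _, _, hc⟩
      · exact absurd hb₁lty (not_lt.mpr hc.le)
      · exact hc
  -- From d3 on D b₂ y x z with a := b₃ : either contradiction via d2, or D b₂ y x b₃
  rcases d3 b₂ y x z b₃ hD2 with h | h
  · exact absurd h (d2 _ _ _ _ hD3)
  · -- D b₂ y x b₃ ; rearrange to D b₃ x b₂ y
    have h' : D b₃ x b₂ y := (d1 _ _ _ _ (d1 _ _ _ _ h).2.2).1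
    rcases conv b₃ x b₂ y hb₃x hb₃b₂ h' with ⟨_, _, hc, _⟩ | ⟨_, _, _, hc⟩
    · exact absurd hc (not_lt.mpr hb₂x)
    · exact absurd hxy (not_lt.mpr hc.le)
end

section
/- Let U be an ultrafilter on an index set κ, let (Gⁱ)_{i∈κ} be graphs and for each i and each g ∈ Gⁱ let H_gⁱ be a graph. Then the ultraproduct ∏_U (Gⁱ[H_gⁱ]) of the lexicographic sums is isomorphic to the lexicographic sum (∏_U Gⁱ)[(H_g)_{g}], where for g = [(gᵢ)]_U the fiber H_g is the ultraproduct ∏_U H_{gᵢ}ⁱ (which is well-defined, independent of the choice of representative (gᵢ) up to isomorphism). -/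
open Filter

universe u v

/-- The lexicographic sum G[(H_a)] of a family of graphs (H_a)_{a ∈ G} along a graph G:
the vertex set is the disjoint union Σ a, H a, and (a,b) ~ (a',b') iff a ~_G a'
(in particular a ≠ a') or a = a' and b ~_{H a} b'. -/
def lexSum {α : Type u} {β : α → Type v} (G : SimpleGraph α)
    (H : ∀ a : α, SimpleGraph (β a)) : SimpleGraph (Σ a, β a) where
  Adj x y := G.Adj x.1 y.1 ∨ ∃ h : y.1 = x.1, (H x.1).Adj x.2 (h ▸ y.2)
  symm := by
    refine ⟨?_⟩
    rintro ⟨a, b⟩ ⟨a', b'⟩ h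
    rcases h with h | ⟨h, h'⟩
    · exact Or.inl h.symm
    · dsimp only at h h' ⊢
      subst h
      exact Or.inr ⟨rfl, h'.symm⟩
  loopless := by
    refine ⟨?_⟩
    rintro ⟨a, b⟩ (h | ⟨h, h'⟩)
    · exact G.loopless.irrefl a h
    · rw [Subsingleton.elim h rfl] at h'
      exact (H a).loopless.irrefl b h'

/-- The ultraproduct of a family of graphs along an ultrafilter, with adjacency given
by Łoś's theorem. -/
def ultraGraph {κ : Type*} (U : Ultrafilter κ) (M : κ → Type u)
    (Gr : ∀ i, SimpleGraph (M i)) : SimpleGraph ((U : Filter κ).Product M) where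
  Adj x y :=
    Quotient.liftOn₂ x y (fun f g => ∀ᶠ i in U, (Gr i).Adj (f i) (g i))
      (by
        intro f₁ g₁ f₂ g₂ hf hg
        refine propext ⟨fun h => ?_, fun h => ?_⟩
        · filter_upwards [h, hf, hg] with i ha hf' hg'
          rw [← hf', ← hg']; exact ha
        · filter_upwards [h, hf, hg] with i ha hf' hg'
          rw [hf', hg']; exact ha)
  symm := by
    refine ⟨?_⟩
    intro x y
    refine Quotient.inductionOn₂ x y ?_
    intro f g h
    exact h.mono fun i hi => hi.symm
  loopless := by
    refine ⟨?_⟩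
    intro x
    refine Quotient.inductionOn x ?_
    intro f h
    obtain ⟨i, hi⟩ := h.exists
    exact (Gr i).loopless.irrefl (f i) hi


private theorem sigma_cast' {α : Type u} {β : α → Type v} {a b : α} (e : a = b) (x : β a) :
    (⟨b, cast (congrArg β e) x⟩ : Σ a, β a) = ⟨a, x⟩ := by subst e; rfl

theorem ultraGraph_adj_out {κ : Type*} (U : Ultrafilter κ) (M : κ → Type u)
    (Gr : ∀ i, SimpleGraph (M i)) (x y : (U : Filter κ).Product M) :
    (ultraGraph U M Gr).Adj x y ↔ ∀ᶠ i in U, (Gr i).Adj (x.out i) (y.out i) := by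
  conv_lhs => rw [← x.out_eq, ← y.out_eq]
  exact Iff.rfl

/-- The map from the lexicographic sum of ultraproducts to the ultraproduct of
lexicographic sums. -/
noncomputable def psiFun {κ : Type*} (U : Ultrafilter κ) (G : κ → Type u) (H : ∀ i, G i → Type u) :
    (Σ q : (U : Filter κ).Product G, (U : Filter κ).Product (fun i => H i (q.out i))) →
      (U : Filter κ).Product (fun i => Σ g : G i, H i g) :=
  fun x => Quotient.liftOn x.2
    (fun h => Quotient.mk _ (fun i => (⟨x.1.out i, h i⟩ : Σ g : G i, H i g)))
    (fun h h' e => Quotient.sound (e.mono fun i hi => by dsimp only; rw [hi]))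

theorem psiFun_inj {κ : Type*} (U : Ultrafilter κ) (G : κ → Type u) (H : ∀ i, G i → Type u) :
    Function.Injective (psiFun U G H) := by
  rintro ⟨q, y⟩ ⟨q', y'⟩
  refine Quotient.inductionOn₂ y y' ?_
  intro h h' hpsi
  have E : ∀ᶠ i in U, (⟨q.out i, h i⟩ : Σ g : G i, H i g) = ⟨q'.out i, h' i⟩ :=
    Quotient.exact hpsi
  have hq : q = q' := by
    rw [← q.out_eq, ← q'.out_eq]
    exact Quotient.sound (E.mono fun i hi => congrArg Sigma.fst hi)
  subst hq
  refine Sigma.ext rfl (heq_of_eq ?_)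
  exact Quotient.sound (E.mono fun i hi => eq_of_heq (Sigma.mk.inj_iff.mp hi).2)

theorem psiFun_surj {κ : Type*} (U : Ultrafilter κ) (G : κ → Type u)
    (H : ∀ i, G i → Type u) [∀ i g, Nonempty (H i g)] :
    Function.Surjective (psiFun U G H) := by
  intro x
  refine Quotient.inductionOn x ?_
  intro f
  classical
  set q : (U : Filter κ).Product G := Quotient.mk _ (fun i => (f i).1) with hq
  have E : ∀ᶠ i in U, q.out i = (f i).1 := Quotient.exact q.out_eq
  refine ⟨⟨q, Quotient.mk _ (fun i =>
    if e : (f i).1 = q.out i then cast (congrArg (H i) e) (f i).2 else Classical.arbitrary _)⟩, ?_⟩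
  refine Quotient.sound ?_
  filter_upwards [E] with i e
  rw [dif_pos e.symm]
  exact sigma_cast' e.symm (f i).2

/-- An ultraproduct of lexicographic sums of graphs is isomorphic to the
lexicographic sum, over the ultraproduct of the base graphs, of the ultraproducts of
the fibers (fibers computed at a chosen representative of each base class, which is
well defined up to isomorphism). -/
theorem stmt18 {κ : Type*} (U : Ultrafilter κ)
    (G : κ → Type u) [∀ i, Nonempty (G i)]
    (Gg : ∀ i, SimpleGraph (G i))
    (H : ∀ i, G i → Type u) [∀ i g, Nonempty (H i g)]
    (Hg : ∀ i (g : G i), SimpleGraph (H i g)) :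
    Nonempty
      ((ultraGraph U (fun i => Σ g : G i, H i g) (fun i => lexSum (Gg i) (Hg i))) ≃g
        (lexSum (ultraGraph U G Gg)
          (fun q : (U : Filter κ).Product G =>
            ultraGraph U (fun i => H i (q.out i)) (fun i => Hg i (q.out i))))) := by
  classical
  refine ⟨RelIso.symm ⟨Equiv.ofBijective (psiFun U G H) ⟨psiFun_inj U G H, psiFun_surj U G H⟩, ?_⟩⟩
  rintro ⟨q, y⟩ ⟨q', y'⟩
  refine Quotient.inductionOn₂ y y' ?_
  intro h h'
  show (ultraGraph U _ _).Adj (psiFun U G H ⟨q, Quotient.mk _ h⟩)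
      (psiFun U G H ⟨q', Quotient.mk _ h'⟩) ↔ _
  have hL : (ultraGraph U (fun i => Σ g : G i, H i g) (fun i => lexSum (Gg i) (Hg i))).Adj
      (psiFun U G H ⟨q, Quotient.mk _ h⟩) (psiFun U G H ⟨q', Quotient.mk _ h'⟩) ↔
      ∀ᶠ i in U, (lexSum (Gg i) (Hg i)).Adj ⟨q.out i, h i⟩ ⟨q'.out i, h' i⟩ := Iff.rfl
  rw [hL]
  by_cases hqq : q' = q
  · subst hqq
    have pt : ∀ i, (lexSum (Gg i) (Hg i)).Adj ⟨q'.out i, h i⟩ ⟨q'.out i, h' i⟩ ↔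
        (Hg i (q'.out i)).Adj (h i) (h' i) := by
      intro i
      constructor
      · rintro (ha | ⟨e, ha⟩)
        · exact absurd ha ((Gg i).irrefl)
        · rwa [Subsingleton.elim e rfl] at ha
      · intro ha
        exact Or.inr ⟨rfl, ha⟩
    rw [eventually_congr (Eventually.of_forall pt)]
    show _ ↔ (ultraGraph U G Gg).Adj q' q' ∨ _
    constructor
    · intro ha
      exact Or.inr ⟨rfl, ha⟩
    · rintro (ha | ⟨e, ha⟩)
      · exact absurd ha ((ultraGraph U G Gg).irrefl)
      · rwa [Subsingleton.elim e rfl] at ha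
  · have hne : ∀ᶠ i in U, ¬ (q'.out i = q.out i) := by
      rw [Ultrafilter.eventually_not]
      intro hcon
      exact hqq (by rw [← q.out_eq, ← q'.out_eq]; exact Quotient.sound hcon)
    have hL2 : (∀ᶠ i in U, (lexSum (Gg i) (Hg i)).Adj ⟨q.out i, h i⟩ ⟨q'.out i, h' i⟩) ↔
        ∀ᶠ i in U, (Gg i).Adj (q.out i) (q'.out i) := by
      constructor
      · intro ha
        filter_upwards [ha, hne] with i hi hni
        rcases hi with hi | ⟨e, _⟩
        · exact hi
        · exact absurd e hni
      · intro ha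
        exact ha.mono fun i hi => Or.inl hi
    rw [hL2, ← ultraGraph_adj_out U G Gg q q']
    show _ ↔ (ultraGraph U G Gg).Adj q q' ∨ _
    constructor
    · exact fun ha => Or.inl ha
    · rintro (ha | ⟨e, _⟩)
      · exact ha
      · exact absurd e hqq
end
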